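/- Let h ≥ 1 be an integer, A > 0 and B real numbers. Suppose φ ∈ 𝒮(ℝ) satisfies −φ''(t) + A t^(2h) φ(t) + B t^(h−1) φ(t) = 0 for all t ∈ ℝ. Then A · ∫ℝ t^(2h) |φ(t)|² dt = −(B/2) · ∫ℝ t^(h−1) |φ(t)|² dt. -/

import Mathlib

open MeasureTheory Filter

private lemma hnorm_aux (z : ℂ) : ‖z‖ ^ 2 = z.re ^ 2 + z.im ^ 2 := by
  rw [Complex.sq_norm, Complex.normSq_apply]; ring

private lemma re_le_norm (z : ℂ) : |z.re| ≤ ‖z‖ := by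
  exact Complex.abs_re_le_norm z

private lemma im_le_norm (z : ℂ) : |z.im| ≤ ‖z‖ := by
  exact Complex.abs_im_le_norm z

private lemma bd_integrable (f g : SchwartzMap ℝ ℂ) (k : ℕ) (C : ℝ) (hC : 0 ≤ C) (F : ℝ → ℝ)
    (hc : Continuous F) (hF : ∀ t, |F t| ≤ C * (|t| ^ k * ‖f t‖ * ‖g t‖)) :
    Integrable F := by
  obtain ⟨Cg, hCg0, hCg⟩ := g.decay 0 0
  have hCg' : ∀ t : ℝ, ‖g t‖ ≤ Cg := by
    intro t; simpa using hCg t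
  refine ((f.integrable_pow_mul volume k).const_mul (C * Cg)).mono'
    hc.aestronglyMeasurable (Eventually.of_forall fun t => ?_)
  rw [Real.norm_eq_abs]
  calc |F t| ≤ C * (|t| ^ k * ‖f t‖ * ‖g t‖) := hF t
    _ ≤ C * (|t| ^ k * ‖f t‖ * Cg) := by gcongr; exact hCg' t
    _ = C * Cg * (‖t‖ ^ k * ‖f t‖) := by rw [Real.norm_eq_abs]; ring

private lemma bd_tendsto (f g : SchwartzMap ℝ ℂ) (k : ℕ) (C : ℝ) (hC : 0 ≤ C) (F : ℝ → ℝ)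
    (hF : ∀ t, |F t| ≤ C * (|t| ^ k * ‖f t‖ * ‖g t‖)) {l : Filter ℝ}
    (hl : Filter.Tendsto (fun t : ℝ => |t|) l Filter.atTop) :
    Filter.Tendsto F l (nhds 0) := by
  obtain ⟨Cf, hCf0, hCf⟩ := f.decay (k + 1) 0
  have hCf' : ∀ t : ℝ, |t| ^ (k + 1) * ‖f t‖ ≤ Cf := by
    intro t; simpa [Real.norm_eq_abs] using hCf t
  obtain ⟨Cg, hCg0, hCg⟩ := g.decay 0 0
  have hCg' : ∀ t : ℝ, ‖g t‖ ≤ Cg := by intro t; simpa using hCg t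
  apply squeeze_zero_norm' (a := fun t : ℝ => C * Cf * Cg / |t|)
  · filter_upwards [hl.eventually_ge_atTop 1] with t ht
    have ht0 : (0 : ℝ) < |t| := lt_of_lt_of_le one_pos ht
    rw [Real.norm_eq_abs, le_div_iff₀ ht0]
    calc |F t| * |t| ≤ (C * (|t| ^ k * ‖f t‖ * ‖g t‖)) * |t| := by
          exact mul_le_mul_of_nonneg_right (hF t) ht0.le
      _ = C * ((|t| ^ (k + 1) * ‖f t‖) * ‖g t‖) := by ring
      _ ≤ C * (Cf * Cg) := by
          gcongr
          · exact hCf' t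
          · exact hCg' t
      _ = C * Cf * Cg := by ring
  · exact Filter.Tendsto.div_atTop tendsto_const_nhds hl

private lemma integral_deriv_zero (G G' : ℝ → ℝ) (hd : ∀ t, HasDerivAt G (G' t) t)
    (hi : Integrable G') (hb : Filter.Tendsto G Filter.atBot (nhds 0))
    (ht : Filter.Tendsto G Filter.atTop (nhds 0)) :
    ∫ t, G' t = 0 := by
  have := MeasureTheory.integral_of_hasDerivAt_of_tendsto hd hi hb ht
  simpa using this

/-- Let `h ≥ 1` be an integer, `A > 0` and `B` real numbers. Suppose `φ ∈ 𝒮(ℝ)`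
satisfies `−φ''(t) + A t^(2h) φ(t) + B t^(h−1) φ(t) = 0` for all `t ∈ ℝ`. Then
`A · ∫ t^(2h) |φ(t)|² dt = −(B/2) · ∫ t^(h−1) |φ(t)|² dt`. -/
theorem stmt_10 (h : ℕ) (hh : 1 ≤ h) (A B : ℝ) (hA : 0 < A) (φ : SchwartzMap ℝ ℂ)
    (hφ : ∀ t : ℝ, -(deriv (deriv (⇑φ)) t) + (A : ℂ) * (t : ℂ) ^ (2 * h) * φ t
      + (B : ℂ) * (t : ℂ) ^ (h - 1) * φ t = 0) :
    A * (∫ t : ℝ, t ^ (2 * h) * ‖φ t‖ ^ 2) = -(B / 2) * ∫ t : ℝ, t ^ (h - 1) * ‖φ t‖ ^ 2 := by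
  obtain ⟨m, rfl⟩ : ∃ m, h = m + 1 := ⟨h - 1, (Nat.succ_pred_eq_of_pos hh).symm⟩
  simp only [show 2 * (m + 1) = 2 * m + 2 from by ring, Nat.add_sub_cancel] at hφ ⊢
  set f1 : SchwartzMap ℝ ℂ := SchwartzMap.derivCLM ℝ ℂ φ with hf1
  set f2 : SchwartzMap ℝ ℂ := SchwartzMap.derivCLM ℝ ℂ f1 with hf2
  have hcoe1 : deriv (⇑φ) = ⇑f1 := funext fun s => (SchwartzMap.derivCLM_apply ℝ φ s).symm
  have hcoe2 : deriv (⇑f1) = ⇑f2 := funext fun s => (SchwartzMap.derivCLM_apply ℝ f1 s).symm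
  rw [hcoe1, hcoe2] at hφ
  -- derivatives as HasDerivAt
  have hφd : ∀ t, HasDerivAt (⇑φ) (f1 t) t := by
    intro t
    have := (φ.differentiable t).hasDerivAt
    rwa [hcoe1] at this
  have hf1d : ∀ t, HasDerivAt (⇑f1) (f2 t) t := by
    intro t
    have := (f1.differentiable t).hasDerivAt
    rwa [hcoe2] at this
  -- the ODE, real and imaginary parts
  have hf2val : ∀ t : ℝ, f2 t = ((A * t ^ (2 * m + 2) + B * t ^ m : ℝ) : ℂ) * φ t := by
    intro t
    have h0 := hφ t
    push_cast
    linear_combination (-1 : ℂ) * h0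
  have hre2 : ∀ t : ℝ, (f2 t).re = (A * t ^ (2 * m + 2) + B * t ^ m) * (φ t).re := by
    intro t; rw [hf2val t, Complex.re_ofReal_mul]
  have him2 : ∀ t : ℝ, (f2 t).im = (A * t ^ (2 * m + 2) + B * t ^ m) * (φ t).im := by
    intro t; rw [hf2val t, Complex.im_ofReal_mul]
  -- HasDerivAt for re/im parts
  have hp : ∀ t, HasDerivAt (fun s => (φ s).re) ((f1 t).re) t := fun t => by
    exact Complex.reCLM.hasFDerivAt.comp_hasDerivAt t (hφd t)
  have hq : ∀ t, HasDerivAt (fun s => (φ s).im) ((f1 t).im) t := fun t => by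
    exact Complex.imCLM.hasFDerivAt.comp_hasDerivAt t (hφd t)
  have hp1 : ∀ t, HasDerivAt (fun s => (f1 s).re)
      ((A * t ^ (2 * m + 2) + B * t ^ m) * (φ t).re) t := fun t => by
    have := Complex.reCLM.hasFDerivAt.comp_hasDerivAt t (hf1d t)
    simp only [Complex.reCLM_apply, hre2 t] at this; exact this
  have hq1 : ∀ t, HasDerivAt (fun s => (f1 s).im)
      ((A * t ^ (2 * m + 2) + B * t ^ m) * (φ t).im) t := fun t => by
    have := Complex.imCLM.hasFDerivAt.comp_hasDerivAt t (hf1d t)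
    simp only [Complex.imCLM_apply, him2 t] at this; exact this
  -- continuity facts
  have hcp : Continuous fun t : ℝ => (φ t).re := Complex.continuous_re.comp φ.continuous
  have hcq : Continuous fun t : ℝ => (φ t).im := Complex.continuous_im.comp φ.continuous
  have hcp1 : Continuous fun t : ℝ => (f1 t).re := Complex.continuous_re.comp f1.continuous
  have hcq1 : Continuous fun t : ℝ => (f1 t).im := Complex.continuous_im.comp f1.continuous
  -- the three basic integrable functions
  have he : Integrable (fun t : ℝ => (f1 t).re ^ 2 + (f1 t).im ^ 2) := by
    refine bd_integrable f1 f1 0 1 zero_le_one (F := _) (by fun_prop) fun t => ?_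
    rw [← hnorm_aux (f1 t)]
    simp [abs_of_nonneg (sq_nonneg (‖f1 t‖)), sq]
  have hx : Integrable (fun t : ℝ => t ^ (2 * m + 2) * ((φ t).re ^ 2 + (φ t).im ^ 2)) := by
    refine bd_integrable φ φ (2 * m + 2) 1 zero_le_one (F := _) (by fun_prop) fun t => ?_
    rw [← hnorm_aux (φ t), abs_mul, abs_pow, abs_of_nonneg (sq_nonneg (‖φ t‖))]
    rw [one_mul, sq]; ring_nf; exact le_rfl
  have hy : Integrable (fun t : ℝ => t ^ m * ((φ t).re ^ 2 + (φ t).im ^ 2)) := by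
    refine bd_integrable φ φ m 1 zero_le_one (F := _) (by fun_prop) fun t => ?_
    rw [← hnorm_aux (φ t), abs_mul, abs_pow, abs_of_nonneg (sq_nonneg (‖φ t‖))]
    rw [one_mul, sq]; ring_nf; exact le_rfl
  set E : ℝ := ∫ t : ℝ, ((f1 t).re ^ 2 + (f1 t).im ^ 2) with hE
  set X : ℝ := ∫ t : ℝ, t ^ (2 * m + 2) * ((φ t).re ^ 2 + (φ t).im ^ 2) with hX
  set Y : ℝ := ∫ t : ℝ, t ^ m * ((φ t).re ^ 2 + (φ t).im ^ 2) with hY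
  -- First identity (energy): E + (A*X + B*Y) = 0
  have eq1 : E + (A * X + B * Y) = 0 := by
    have hD : ∀ t : ℝ, HasDerivAt (fun s => (φ s).re * (f1 s).re + (φ s).im * (f1 s).im)
        (((f1 t).re ^ 2 + (f1 t).im ^ 2)
          + (A * (t ^ (2 * m + 2) * ((φ t).re ^ 2 + (φ t).im ^ 2))
            + B * (t ^ m * ((φ t).re ^ 2 + (φ t).im ^ 2)))) t := by
      intro t
      have := ((hp t).mul (hp1 t)).add ((hq t).mul (hq1 t))
      refine this.congr_deriv ?_
      ring
    have hint : Integrable (fun t : ℝ => ((f1 t).re ^ 2 + (f1 t).im ^ 2)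
        + (A * (t ^ (2 * m + 2) * ((φ t).re ^ 2 + (φ t).im ^ 2))
          + B * (t ^ m * ((φ t).re ^ 2 + (φ t).im ^ 2)))) :=
      he.add ((hx.const_mul A).add (hy.const_mul B))
    have hbound : ∀ t : ℝ, |(φ t).re * (f1 t).re + (φ t).im * (f1 t).im|
        ≤ 2 * (|t| ^ 0 * ‖φ t‖ * ‖f1 t‖) := by
      intro t
      calc |(φ t).re * (f1 t).re + (φ t).im * (f1 t).im|
          ≤ |(φ t).re * (f1 t).re| + |(φ t).im * (f1 t).im| := abs_add_le _ _
        _ ≤ ‖φ t‖ * ‖f1 t‖ + ‖φ t‖ * ‖f1 t‖ := by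
            rw [abs_mul, abs_mul]
            gcongr
            · exact re_le_norm _
            · exact re_le_norm _
            · exact im_le_norm _
            · exact im_le_norm _
        _ = 2 * (|t| ^ 0 * ‖φ t‖ * ‖f1 t‖) := by simp; ring
    have hz := integral_deriv_zero _ _ hD hint
      (bd_tendsto φ f1 0 2 (by norm_num) _ hbound tendsto_abs_atBot_atTop)
      (bd_tendsto φ f1 0 2 (by norm_num) _ hbound tendsto_abs_atTop_atTop)
    have hxA : Integrable (fun t : ℝ => A * (t ^ (2 * m + 2) * ((φ t).re ^ 2 + (φ t).im ^ 2))) :=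
      hx.const_mul A
    have hyB : Integrable (fun t : ℝ => B * (t ^ m * ((φ t).re ^ 2 + (φ t).im ^ 2))) :=
      hy.const_mul B
    have hxy : Integrable (fun t : ℝ => A * (t ^ (2 * m + 2) * ((φ t).re ^ 2 + (φ t).im ^ 2))
        + B * (t ^ m * ((φ t).re ^ 2 + (φ t).im ^ 2))) := hxA.add hyB
    rw [integral_add he hxy, integral_add hxA hyB, integral_const_mul, integral_const_mul] at hz
    exact hz
  -- Second identity (virial): E - (A*(2m+3)*X + B*(m+1)*Y) = 0
  have eq2 : E - (A * (2 * (m : ℝ) + 3) * X + B * ((m : ℝ) + 1) * Y) = 0 := by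
    have hD : ∀ t : ℝ, HasDerivAt (fun s : ℝ => s * ((f1 s).re ^ 2 + (f1 s).im ^ 2)
        - A * (s ^ (2 * m + 3) * ((φ s).re ^ 2 + (φ s).im ^ 2))
        - B * (s ^ (m + 1) * ((φ s).re ^ 2 + (φ s).im ^ 2)))
        (((f1 t).re ^ 2 + (f1 t).im ^ 2)
          - (A * (2 * (m : ℝ) + 3) * (t ^ (2 * m + 2) * ((φ t).re ^ 2 + (φ t).im ^ 2))
            + B * ((m : ℝ) + 1) * (t ^ m * ((φ t).re ^ 2 + (φ t).im ^ 2)))) t := by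
      intro t
      have h1 : HasDerivAt (fun s : ℝ => s * ((f1 s).re ^ 2 + (f1 s).im ^ 2))
          (1 * ((f1 t).re ^ 2 + (f1 t).im ^ 2)
            + t * (2 * (f1 t).re ^ 1 * ((A * t ^ (2 * m + 2) + B * t ^ m) * (φ t).re)
              + 2 * (f1 t).im ^ 1 * ((A * t ^ (2 * m + 2) + B * t ^ m) * (φ t).im))) t :=
        (hasDerivAt_id t).mul (((hp1 t).pow 2).add ((hq1 t).pow 2))
      have h2 : HasDerivAt (fun s : ℝ => s ^ (2 * m + 3) * ((φ s).re ^ 2 + (φ s).im ^ 2))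
          ((2 * m + 3 : ℕ) * t ^ (2 * m + 3 - 1) * ((φ t).re ^ 2 + (φ t).im ^ 2)
            + t ^ (2 * m + 3) * (2 * (φ t).re ^ 1 * (f1 t).re + 2 * (φ t).im ^ 1 * (f1 t).im)) t :=
        (hasDerivAt_pow (2 * m + 3) t).mul (((hp t).pow 2).add ((hq t).pow 2))
      have h3 : HasDerivAt (fun s : ℝ => s ^ (m + 1) * ((φ s).re ^ 2 + (φ s).im ^ 2))
          ((m + 1 : ℕ) * t ^ (m + 1 - 1) * ((φ t).re ^ 2 + (φ t).im ^ 2)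
            + t ^ (m + 1) * (2 * (φ t).re ^ 1 * (f1 t).re + 2 * (φ t).im ^ 1 * (f1 t).im)) t :=
        (hasDerivAt_pow (m + 1) t).mul (((hp t).pow 2).add ((hq t).pow 2))
      have htot := (h1.sub (h2.const_mul A)).sub (h3.const_mul B)
      refine htot.congr_deriv ?_
      simp only [show 2 * m + 3 - 1 = 2 * m + 2 from by omega, Nat.add_sub_cancel]
      push_cast
      ring
    have hint : Integrable (fun t : ℝ => ((f1 t).re ^ 2 + (f1 t).im ^ 2)
        - (A * (2 * (m : ℝ) + 3) * (t ^ (2 * m + 2) * ((φ t).re ^ 2 + (φ t).im ^ 2))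
          + B * ((m : ℝ) + 1) * (t ^ m * ((φ t).re ^ 2 + (φ t).im ^ 2)))) :=
      he.sub ((hx.const_mul _).add (hy.const_mul _))
    -- tendsto of the boundary function at ±∞
    have hb1 : ∀ t : ℝ, |t * ((f1 t).re ^ 2 + (f1 t).im ^ 2)| ≤ 1 * (|t| ^ 1 * ‖f1 t‖ * ‖f1 t‖) := by
      intro t
      rw [← hnorm_aux (f1 t), abs_mul, abs_of_nonneg (sq_nonneg (‖f1 t‖)), one_mul, pow_one, sq]
      ring_nf; exact le_rfl
    have hb2 : ∀ t : ℝ, |A * (t ^ (2 * m + 3) * ((φ t).re ^ 2 + (φ t).im ^ 2))|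
        ≤ |A| * (|t| ^ (2 * m + 3) * ‖φ t‖ * ‖φ t‖) := by
      intro t
      rw [← hnorm_aux (φ t), abs_mul, abs_mul, abs_pow,
        abs_of_nonneg (sq_nonneg (‖φ t‖)), sq]
      ring_nf; exact le_rfl
    have hb3 : ∀ t : ℝ, |B * (t ^ (m + 1) * ((φ t).re ^ 2 + (φ t).im ^ 2))|
        ≤ |B| * (|t| ^ (m + 1) * ‖φ t‖ * ‖φ t‖) := by
      intro t
      rw [← hnorm_aux (φ t), abs_mul, abs_mul, abs_pow,
        abs_of_nonneg (sq_nonneg (‖φ t‖)), sq]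
      ring_nf; exact le_rfl
    have htend : ∀ l : Filter ℝ, Filter.Tendsto (fun t : ℝ => |t|) l Filter.atTop →
        Filter.Tendsto (fun t : ℝ => t * ((f1 t).re ^ 2 + (f1 t).im ^ 2)
          - A * (t ^ (2 * m + 3) * ((φ t).re ^ 2 + (φ t).im ^ 2))
          - B * (t ^ (m + 1) * ((φ t).re ^ 2 + (φ t).im ^ 2))) l (nhds 0) := by
      intro l hl
      have t1 := bd_tendsto f1 f1 1 1 zero_le_one _ hb1 hl
      have t2 := bd_tendsto φ φ (2 * m + 3) |A| (abs_nonneg A) _ hb2 hl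
      have t3 := bd_tendsto φ φ (m + 1) |B| (abs_nonneg B) _ hb3 hl
      simpa using (t1.sub t2).sub t3
    have hz := integral_deriv_zero _ _ hD hint
      (htend Filter.atBot tendsto_abs_atBot_atTop)
      (htend Filter.atTop tendsto_abs_atTop_atTop)
    have hxA : Integrable (fun t : ℝ =>
        A * (2 * (m : ℝ) + 3) * (t ^ (2 * m + 2) * ((φ t).re ^ 2 + (φ t).im ^ 2))) :=
      hx.const_mul _
    have hyB : Integrable (fun t : ℝ =>
        B * ((m : ℝ) + 1) * (t ^ m * ((φ t).re ^ 2 + (φ t).im ^ 2))) :=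
      hy.const_mul _
    have hxy : Integrable (fun t : ℝ =>
        A * (2 * (m : ℝ) + 3) * (t ^ (2 * m + 2) * ((φ t).re ^ 2 + (φ t).im ^ 2))
        + B * ((m : ℝ) + 1) * (t ^ m * ((φ t).re ^ 2 + (φ t).im ^ 2))) := hxA.add hyB
    rw [integral_sub he hxy, integral_add hxA hyB, integral_const_mul, integral_const_mul] at hz
    exact hz
  -- combine
  have hgoalX : (∫ t : ℝ, t ^ (2 * m + 2) * ‖φ t‖ ^ 2) = X := by
    rw [hX]; congr 1; funext t; rw [hnorm_aux]
  have hgoalY : (∫ t : ℝ, t ^ m * ‖φ t‖ ^ 2) = Y := by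
    rw [hY]; congr 1; funext t; rw [hnorm_aux]
  rw [hgoalX, hgoalY]
  have key : (2 * (m : ℝ) + 4) * (A * X + (B / 2) * Y) = 0 := by linear_combination eq1 - eq2
  have hm0 : (2 * (m : ℝ) + 4) ≠ 0 := by positivity
  have := (mul_eq_zero.mp key).resolve_left hm0
  linarith
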